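/- Let M ∈ ℕ and c > 0. Let ψ¹ : ℝ → ℝ be bounded and measurable with support contained in [−c,c] and with ∫_ℝ x^n ψ¹(x) dx = 0 for all integers 0 ≤ n ≤ M. Let f : ℝ → ℝ be of class C^{M+1} with bounded (M+1)-st derivative. Then for all a > 0: |∫_ℝ ψ¹(x/a) f(x) dx| ≤ (2 c^{M+2} / (M+1)!) · ‖ψ¹‖_∞ · ‖f^{(M+1)}‖_∞ · a^{M+2}. (Vanishing-moment estimate implicit in the proof of Theorem 3.1, Part 2(a), where Taylor polynomials of degree ≤ M are annihilated by the moments of ψ¹.) -/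

import Mathlib

open MeasureTheory Real Set


lemma abs_integral_abs_pow (k : ℕ) (x : ℝ) :
    |∫ t in (0:ℝ)..x, |t| ^ k| = |x| ^ (k + 1) / (k + 1) := by
  rcases le_or_gt 0 x with hx | hx
  · rw [intervalIntegral.integral_congr (g := fun t => t ^ k)
      (fun t ht => by
        rw [uIcc_of_le hx] at ht
        simp [abs_of_nonneg ht.1]),
      integral_pow, abs_of_nonneg hx]
    rw [abs_of_nonneg (div_nonneg (by simpa using pow_nonneg hx (k+1)) (by positivity))]
    simp
  · rw [intervalIntegral.integral_congr (g := fun t => (-t) ^ k)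
      (fun t ht => by
        rw [uIcc_of_ge hx.le] at ht
        simp [abs_of_nonpos ht.2]),
      intervalIntegral.integral_comp_neg (f := fun t => t ^ k)]
    have hx' : (0:ℝ) ≤ -x := by linarith
    rw [neg_zero, integral_pow, abs_of_nonpos hx.le]
    simp only [zero_pow (Nat.succ_ne_zero k), zero_sub, abs_div, abs_neg,
      abs_of_nonneg (pow_nonneg hx' (k+1))]
    rw [abs_of_nonneg (by positivity : (0:ℝ) ≤ (k:ℝ)+1)]

lemma ftc_bound {R D : ℝ → ℝ} (hR : ∀ t, HasDerivAt R (D t) t) (hD : Continuous D)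
    (hR0 : R 0 = 0) {B : ℝ} (hB : 0 ≤ B) (k : ℕ) (hbound : ∀ t, |D t| ≤ B * |t| ^ k)
    (x : ℝ) : |R x| ≤ B * |x| ^ (k + 1) / (k + 1) := by
  have hRx : R x = ∫ t in (0:ℝ)..x, D t := by
    rw [intervalIntegral.integral_eq_sub_of_hasDerivAt (fun t _ => hR t)
      (hD.intervalIntegrable 0 x), hR0, sub_zero]
  rw [hRx, ← Real.norm_eq_abs]
  calc ‖∫ t in (0:ℝ)..x, D t‖
      ≤ |∫ t in (0:ℝ)..x, B * |t| ^ k| := by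
        apply intervalIntegral.norm_integral_le_abs_of_norm_le
        · exact Filter.Eventually.of_forall fun t => by
            rw [Real.norm_eq_abs]; exact hbound t
        · exact (continuous_const.mul ((continuous_abs).pow k)).intervalIntegrable 0 x
    _ = B * |x| ^ (k + 1) / (k + 1) := by
        rw [intervalIntegral.integral_const_mul, abs_mul, abs_of_nonneg hB,
          abs_integral_abs_pow, mul_div_assoc]

lemma taylor_bound (n : ℕ) : ∀ f : ℝ → ℝ, ContDiff ℝ ((n + 1 : ℕ) : ℕ∞) f →
    ∀ C : ℝ, (∀ x, |iteratedDeriv (n + 1) f x| ≤ C) →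
    ∀ x : ℝ,
      |f x - ∑ k ∈ Finset.range (n + 1), iteratedDeriv k f 0 / (k.factorial : ℝ) * x ^ k|
        ≤ C * |x| ^ (n + 1) / ((n + 1).factorial : ℝ) := by
  induction n with
  | zero =>
    intro f hf C hC x
    have hC0 : 0 ≤ C := le_trans (abs_nonneg _) (hC 0)
    have hdiff : Differentiable ℝ f := hf.differentiable (by simp)
    have hder : Continuous (deriv f) := hf.continuous_deriv (by exact_mod_cast Nat.le_refl 1)
    have := ftc_bound (R := fun x => f x - f 0) (D := deriv f)
      (fun t => ((hdiff t).hasDerivAt).sub_const (f 0)) hder (by simp) hC0 0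
      (fun t => by simpa [iteratedDeriv_one] using hC t) x
    simpa using this
  | succ n ih =>
    intro f hf C hC x
    have hC0 : 0 ≤ C := le_trans (abs_nonneg _) (hC 0)
    have hg : ContDiff ℝ ((n + 1 : ℕ) : ℕ∞) (deriv f) := by
      have := ContDiff.iterate_deriv' (n + 1) 1 (f := f) (by exact_mod_cast hf)
      simpa using this
    have hdiff : Differentiable ℝ f :=
      hf.differentiable (by simp)
    have hC' : ∀ x, |iteratedDeriv (n + 1) (deriv f) x| ≤ C := fun x => by
      rw [← iteratedDeriv_succ']; exact hC x
    have ihg := ih (deriv f) hg C hC'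
    set D : ℝ → ℝ := fun t =>
      deriv f t - ∑ k ∈ Finset.range (n + 1), iteratedDeriv k (deriv f) 0 / (k.factorial : ℝ) * t ^ k
      with hD_def
    set R : ℝ → ℝ := fun t =>
      f t - ∑ k ∈ Finset.range (n + 1 + 1), iteratedDeriv k f 0 / (k.factorial : ℝ) * t ^ k
      with hR_def
    have hR : ∀ t, HasDerivAt R (D t) t := by
      intro t
      have h1 : HasDerivAt (fun t => ∑ k ∈ Finset.range (n + 1 + 1),
          iteratedDeriv k f 0 / (k.factorial : ℝ) * t ^ k)
          (∑ k ∈ Finset.range (n + 1 + 1),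
            iteratedDeriv k f 0 / (k.factorial : ℝ) * ((k : ℝ) * t ^ (k - 1))) t :=
        HasDerivAt.fun_sum fun k _ => (hasDerivAt_pow k t).const_mul _
      have h2 : (∑ k ∈ Finset.range (n + 1 + 1),
          iteratedDeriv k f 0 / (k.factorial : ℝ) * ((k : ℝ) * t ^ (k - 1)))
          = ∑ k ∈ Finset.range (n + 1),
            iteratedDeriv k (deriv f) 0 / (k.factorial : ℝ) * t ^ k := by
        rw [Finset.sum_range_succ']
        simp only [Nat.cast_zero, zero_mul, mul_zero, add_zero]
        refine Finset.sum_congr rfl fun k _ => ?_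
        rw [← iteratedDeriv_succ' (n := k) (f := f), Nat.factorial_succ]
        have : ((k : ℝ) + 1) ≠ 0 := by positivity
        push_cast
        field_simp
      have := ((hdiff t).hasDerivAt).sub h1
      rw [h2] at this
      exact this
    have hDcont : Continuous D :=
      (hg.continuous).sub
        (continuous_finset_sum _ fun k _ => continuous_const.mul (continuous_pow k))
    have hR0 : R 0 = 0 := by
      simp only [hR_def, Finset.sum_range_succ']
      simp [iteratedDeriv_zero]
    have hbound : ∀ t, |D t| ≤ (C / ((n + 1).factorial : ℝ)) * |t| ^ (n + 1) := fun t => by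
      have := ihg t
      rw [hD_def]
      calc |deriv f t - _| ≤ C * |t| ^ (n + 1) / ((n + 1).factorial : ℝ) := ihg t
        _ = (C / ((n + 1).factorial : ℝ)) * |t| ^ (n + 1) := by ring
    have hB : 0 ≤ C / ((n + 1).factorial : ℝ) := by positivity
    have h2' := ftc_bound hR hDcont hR0 hB (n + 1) hbound x
    have heq : C / ((n + 1).factorial : ℝ) * |x| ^ (n + 1 + 1) / ((↑(n + 1) : ℝ) + 1)
        = C * |x| ^ (n + 1 + 1) / ((n + 1 + 1).factorial : ℝ) := by
      rw [div_mul_eq_mul_div, div_div]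
      congr 1
      rw [Nat.factorial_succ (n + 1)]; push_cast; ring
    rw [heq] at h2'
    exact h2'

/-- **Vanishing-moment estimate in Theorem 3.1, Part 2(a).** If `ψ¹` has `M` vanishing
moments and support in `[-c,c]`, and `f ∈ C^{M+1}` has bounded `(M+1)`-st derivative, then
`|∫ ψ¹(x/a) f(x) dx| ≤ (2 c^{M+2}/(M+1)!) ‖ψ¹‖_∞ ‖f^{(M+1)}‖_∞ a^{M+2}`. -/
theorem vanishing_moment_estimate
    (M : ℕ) (c : ℝ) (hc : 0 < c)
    (ψ1 : ℝ → ℝ) (hψ1_meas : Measurable ψ1)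
    (hψ1_supp : Function.support ψ1 ⊆ Icc (-c) c)
    (Cψ : ℝ) (hψ1_bdd : ∀ x, |ψ1 x| ≤ Cψ)
    (hψ1_vm : ∀ n : ℕ, n ≤ M → ∫ x : ℝ, x ^ n * ψ1 x = 0)
    (f : ℝ → ℝ) (hf : ContDiff ℝ ((M + 1 : ℕ) : ℕ∞) f)
    (Cf : ℝ) (hCf : ∀ x, |iteratedDeriv (M + 1) f x| ≤ Cf) :
    ∀ a : ℝ, 0 < a →
      |∫ x : ℝ, ψ1 (x / a) * f x|
        ≤ (2 * c ^ (M + 2) / (Nat.factorial (M + 1))) * Cψ * Cf * a ^ (M + 2) := by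
  intro a ha
  have hCψ0 : 0 ≤ Cψ := le_trans (abs_nonneg _) (hψ1_bdd 0)
  have hCf0 : 0 ≤ Cf := le_trans (abs_nonneg _) (hCf 0)
  set P : ℝ → ℝ := fun x => ∑ k ∈ Finset.range (M + 1),
    iteratedDeriv k f 0 / (k.factorial : ℝ) * x ^ k with hP_def
  have hP_cont : Continuous P :=
    continuous_finset_sum _ fun k _ => continuous_const.mul (continuous_pow k)
  have hrem : ∀ x, |f x - P x| ≤ Cf * |x| ^ (M + 1) / ((M + 1).factorial : ℝ) :=
    taylor_bound M f hf Cf hCf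
  -- support of x ↦ ψ1 (x/a)
  have hsupp : ∀ x : ℝ, x ∉ Icc (-(c * a)) (c * a) → ψ1 (x / a) = 0 := by
    intro x hx
    by_contra h
    apply hx
    have h2 := hψ1_supp (Function.mem_support.2 h)
    have hl := h2.1
    have hr := h2.2
    rw [le_div_iff₀ ha] at hl
    rw [div_le_iff₀ ha] at hr
    constructor <;> [linarith; linarith]
  -- integrability
  have hmeas : Measurable fun x : ℝ => ψ1 (x / a) :=
    hψ1_meas.comp (measurable_id.div_const a)
  have hIcc_fin : volume (Icc (-(c * a)) (c * a)) < ⊤ := measure_Icc_lt_top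
  have hint : ∀ g : ℝ → ℝ, Continuous g → Integrable (fun x => ψ1 (x / a) * g x) := by
    intro g hg
    obtain ⟨K, hK⟩ := (isCompact_Icc (a := -(c * a)) (b := c * a)).exists_bound_of_continuousOn
      hg.continuousOn
    refine Integrable.mono' (g := fun x =>
      (Icc (-(c * a)) (c * a)).indicator (fun _ => Cψ * K) x) ?_ ?_ ?_
    · exact (integrable_indicator_iff measurableSet_Icc).2
        (integrableOn_const hIcc_fin.ne enorm_ne_top)
    · exact (hmeas.mul hg.measurable).aestronglyMeasurable
    · refine Filter.Eventually.of_forall fun x => ?_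
      by_cases hx : x ∈ Icc (-(c * a)) (c * a)
      · simp only [indicator_of_mem hx, Real.norm_eq_abs, abs_mul]
        exact mul_le_mul (hψ1_bdd _) (by simpa using hK x hx) (abs_nonneg _)
          hCψ0
      · simp only [indicator_of_notMem hx, hsupp x hx]
        simp
  have h1 : Integrable (fun x => ψ1 (x / a) * f x) := hint f hf.continuous
  have h2 : Integrable (fun x => ψ1 (x / a) * P x) := hint P hP_cont
  -- vanishing of polynomial part
  have key : ∀ k : ℕ, k ≤ M → ∫ x : ℝ, ψ1 (x / a) * x ^ k = 0 := by
    intro k hk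
    have hcomp := MeasureTheory.Measure.integral_comp_div (g := fun y => ψ1 y * (a * y) ^ k) a
    have hlhs : (fun x : ℝ => ψ1 (x / a) * (a * (x / a)) ^ k)
        = fun x : ℝ => ψ1 (x / a) * x ^ k := by
      funext x; rw [mul_div_cancel₀ _ (ne_of_gt ha)]
    rw [hlhs] at hcomp
    rw [hcomp]
    have : (fun y : ℝ => ψ1 y * (a * y) ^ k) = fun y : ℝ => a ^ k * (y ^ k * ψ1 y) := by
      funext y; rw [mul_pow]; ring
    rw [this, integral_const_mul, hψ1_vm k hk]
    simp
  have hPzero : ∫ x : ℝ, ψ1 (x / a) * P x = 0 := by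
    have : (fun x : ℝ => ψ1 (x / a) * P x) = fun x : ℝ => ∑ k ∈ Finset.range (M + 1),
        (iteratedDeriv k f 0 / (k.factorial : ℝ)) * (ψ1 (x / a) * x ^ k) := by
      funext x
      rw [hP_def, Finset.mul_sum]
      exact Finset.sum_congr rfl fun k _ => by ring
    rw [this, integral_finset_sum]
    · refine Finset.sum_eq_zero fun k hk => ?_
      rw [integral_const_mul, key k (Nat.lt_succ_iff.1 (Finset.mem_range.1 hk)), mul_zero]
    · intro k _
      have := (hint (fun x => iteratedDeriv k f 0 / (k.factorial : ℝ) * x ^ k)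
        (continuous_const.mul (continuous_pow k)))
      refine this.congr ?_
      exact Filter.Eventually.of_forall fun x => by ring
  -- reduce to remainder
  have hsplit : ∫ x : ℝ, ψ1 (x / a) * f x = ∫ x : ℝ, ψ1 (x / a) * (f x - P x) := by
    have : (fun x : ℝ => ψ1 (x / a) * (f x - P x))
        = fun x : ℝ => ψ1 (x / a) * f x - ψ1 (x / a) * P x := by
      funext x; ring
    rw [this, integral_sub h1 h2, hPzero, sub_zero]
  -- final bound
  set B : ℝ := Cψ * (Cf * (c * a) ^ (M + 1) / ((M + 1).factorial : ℝ)) with hB_def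
  have hBnn : 0 ≤ B := by positivity
  have hbd : |∫ x : ℝ, ψ1 (x / a) * (f x - P x)|
      ≤ ∫ x : ℝ, (Icc (-(c * a)) (c * a)).indicator (fun _ => B) x := by
    rw [← Real.norm_eq_abs]
    refine norm_integral_le_of_norm_le ?_ ?_
    · exact (integrable_indicator_iff measurableSet_Icc).2
        (integrableOn_const hIcc_fin.ne (by simp))
    · refine Filter.Eventually.of_forall fun x => ?_
      by_cases hx : x ∈ Icc (-(c * a)) (c * a)
      · simp only [indicator_of_mem hx, Real.norm_eq_abs, abs_mul]
        have hxle : |x| ≤ c * a := abs_le.2 ⟨by linarith [hx.1], hx.2⟩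
        have hp : |x| ^ (M + 1) ≤ (c * a) ^ (M + 1) :=
          pow_le_pow_left₀ (abs_nonneg x) hxle _
        have h3 : |f x - P x| ≤ Cf * (c * a) ^ (M + 1) / ((M + 1).factorial : ℝ) := by
          refine le_trans (hrem x) ?_
          gcongr
        exact mul_le_mul (hψ1_bdd _) h3 (abs_nonneg _) hCψ0
      · simp only [indicator_of_notMem hx, hsupp x hx]
        simp
  have hieq : ∫ x : ℝ, (Icc (-(c * a)) (c * a)).indicator (fun _ => B) x
      = (2 * (c * a)) * B := by
    rw [integral_indicator_const]
    · rw [Measure.real, Real.volume_Icc]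
      rw [ENNReal.toReal_ofReal (by nlinarith : (0:ℝ) ≤ c * a - -(c * a))]
      rw [smul_eq_mul]
      ring_nf
    · exact measurableSet_Icc
  rw [hsplit]
  refine le_trans hbd ?_
  rw [hieq, hB_def]
  apply le_of_eq
  push_cast
  ring
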